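/- Let E be a quantum channel from A to A', let R be a quantum channel from A' to A, and let {p_k, ρ_k}_{k∈K} be a test ensemble on A with |K| ≤ dim H_A. Let R_A be a reference system with dim H_{R_A} = dim H_A. Then √(∑_k p_k D_F(ρ_k, R(E(ρ_k)))²) ≤ max over states ρ on A⊗R_A of D_F(((R∘E)⊗id_{R_A})(ρ), ρ). -/

import Mathlib

open scoped Kronecker
open Matrix
open scoped ComplexOrder Classical

noncomputable section

/-- Positive semidefinite square root of a matrix (junk value `0` if not PSD). -/
noncomputable def matSqrt {n : Type*} [Fintype n] [DecidableEq n]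
    (A : Matrix n n ℂ) : Matrix n n ℂ :=
  if h : A.PosSemidef then
    (h.isHermitian.eigenvectorUnitary : Matrix n n ℂ) *
      Matrix.diagonal ((↑) ∘ Real.sqrt ∘ h.isHermitian.eigenvalues) *
      star (h.isHermitian.eigenvectorUnitary : Matrix n n ℂ)
  else 0

/-- A quantum state: a positive semidefinite matrix of unit trace. -/
def IsState {n : Type*} [Fintype n] [DecidableEq n] (ρ : Matrix n n ℂ) : Prop :=
  ρ.PosSemidef ∧ ρ.trace = 1

/-- Fidelity `F(ρ,σ) = Tr √(√σ ρ √σ)`. -/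
noncomputable def fidelity {n : Type*} [Fintype n] [DecidableEq n]
    (ρ σ : Matrix n n ℂ) : ℝ :=
  ((matSqrt (matSqrt σ * ρ * matSqrt σ)).trace).re

/-- Purified distance `D_F(ρ,σ) = √(1 − F(ρ,σ)²)`. -/
noncomputable def purifiedDist {n : Type*} [Fintype n] [DecidableEq n]
    (ρ σ : Matrix n n ℂ) : ℝ :=
  Real.sqrt (1 - (fidelity ρ σ) ^ 2)

/-- SLD quantum Fisher information
`𝔉_ρ(X) = 2 ∑_{i,j : λ_i+λ_j>0} ((λ_i−λ_j)²/(λ_i+λ_j)) |⟨i|X|j⟩|²`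
(junk value `0` if `ρ` is not Hermitian). -/
noncomputable def qFisher {n : Type*} [Fintype n] [DecidableEq n]
    (ρ X : Matrix n n ℂ) : ℝ :=
  if hρ : ρ.IsHermitian then
    2 * ∑ i, ∑ j,
      (if 0 < hρ.eigenvalues i + hρ.eigenvalues j then
        ((hρ.eigenvalues i - hρ.eigenvalues j) ^ 2 / (hρ.eigenvalues i + hρ.eigenvalues j)) *
          Complex.normSq (dotProduct (star ⇑(hρ.eigenvectorBasis i))
            (X *ᵥ ⇑(hρ.eigenvectorBasis j)))
      else 0)
  else 0

/-- Positive part of a Hermitian matrix (junk value `0` if not Hermitian). -/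
noncomputable def matPosPart {n : Type*} [Fintype n] [DecidableEq n]
    (W : Matrix n n ℂ) : Matrix n n ℂ :=
  if hW : W.IsHermitian then
    (hW.eigenvectorUnitary : Matrix n n ℂ) *
      Matrix.diagonal (fun i => ((max (hW.eigenvalues i) 0 : ℝ) : ℂ)) *
      star (hW.eigenvectorUnitary : Matrix n n ℂ)
  else 0

/-- Negative part of a Hermitian matrix (junk value `0` if not Hermitian). -/
noncomputable def matNegPart {n : Type*} [Fintype n] [DecidableEq n]
    (W : Matrix n n ℂ) : Matrix n n ℂ :=
  if hW : W.IsHermitian then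
    (hW.eigenvectorUnitary : Matrix n n ℂ) *
      Matrix.diagonal (fun i => ((max (-hW.eigenvalues i) 0 : ℝ) : ℂ)) *
      star (hW.eigenvectorUnitary : Matrix n n ℂ)
  else 0

/-- `Δ_W`: difference between the largest and smallest eigenvalues of a Hermitian matrix. -/
noncomputable def specSpread {n : Type*} [Fintype n] [DecidableEq n]
    (W : Matrix n n ℂ) : ℝ :=
  if hW : W.IsHermitian then (⨆ i, hW.eigenvalues i) - (⨅ i, hW.eigenvalues i) else 0

/-- Trace distance `T(ρ,σ) = ½(Tr (ρ−σ)₊ + Tr (ρ−σ)₋)`. -/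
noncomputable def traceDist {n : Type*} [Fintype n] [DecidableEq n]
    (ρ σ : Matrix n n ℂ) : ℝ :=
  (((matPosPart (ρ - σ)).trace).re + ((matNegPart (ρ - σ)).trace).re) / 2

/-- The dual (adjoint w.r.t. the trace pairing) of a linear map on matrices:
`Tr[(dualMap Φ W) ρ] = Tr[W Φ(ρ)]` for all `ρ` whenever `Φ` is linear. -/
noncomputable def dualMap {n m : Type*} [Fintype n] [DecidableEq n] [Fintype m] [DecidableEq m]
    (Φ : Matrix n n ℂ → Matrix m m ℂ) (W : Matrix m m ℂ) : Matrix n n ℂ :=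
  Matrix.of fun i j => (W * Φ (Matrix.single j i 1)).trace

/-- Partial trace over the second tensor factor. -/
def ptraceRight {α β : Type*} [Fintype β] (M : Matrix (α × β) (α × β) ℂ) : Matrix α α ℂ :=
  Matrix.of fun i j => ∑ k, M (i, k) (j, k)

/-- Partial trace over the first tensor factor. -/
def ptraceLeft {α β : Type*} [Fintype α] (M : Matrix (α × β) (α × β) ℂ) : Matrix β β ℂ :=
  Matrix.of fun i j => ∑ k, M (k, i) (k, j)

/-- A quantum channel: a map admitting a Kraus representation `{K_μ}` with
`∑_μ K_μ† K_μ = 1` (this entails complete positivity, trace preservation and linearity). -/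
def IsCPTP {n m : Type*} [Fintype n] [DecidableEq n] [Fintype m] [DecidableEq m]
    (Φ : Matrix n n ℂ → Matrix m m ℂ) : Prop :=
  ∃ (N : ℕ) (K : Fin N → Matrix m n ℂ),
    (∀ ρ, Φ ρ = ∑ μ, K μ * ρ * (K μ)ᴴ) ∧ (∑ μ, (K μ)ᴴ * K μ = 1)

/-- Tensor extension `Φ ⊗ id` of a map on matrices (correct for linear `Φ`). -/
noncomputable def tensorId {a b r : Type*} [Fintype a] [DecidableEq a]
    [Fintype b] [DecidableEq b] [Fintype r]
    (Φ : Matrix a a ℂ → Matrix b b ℂ)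
    (M : Matrix (a × r) (a × r) ℂ) : Matrix (b × r) (b × r) ℂ :=
  Matrix.of fun p q => Φ (Matrix.of fun i j => M (i, p.2) (j, q.2)) p.1 q.1

/-- Operator norm (ℓ²→ℓ²) of a matrix, as a supremum over unit vectors. -/
noncomputable def opNorm {n : Type*} [Fintype n] (M : Matrix n n ℂ) : ℝ :=
  sSup {x : ℝ | ∃ v : n → ℂ, (∑ i, Complex.normSq (v i)) = 1 ∧
    x = Real.sqrt (∑ i, Complex.normSq ((M *ᵥ v) i))}

end
section AuxLemmas

open Matrix
open scoped Kronecker ComplexOrder Classical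

variable {n : Type*} [Fintype n] [DecidableEq n]
variable {r : Type*} [Fintype r] [DecidableEq r]

/-- Port helper: the eigen-decomposition square root of a PSD matrix. -/
noncomputable def Matrix.PosSemidef.sqrt {A : Matrix n n ℂ} (h : A.PosSemidef) : Matrix n n ℂ :=
  (h.isHermitian.eigenvectorUnitary : Matrix n n ℂ) *
    Matrix.diagonal ((↑) ∘ Real.sqrt ∘ h.isHermitian.eigenvalues) *
    star (h.isHermitian.eigenvectorUnitary : Matrix n n ℂ)

section PortHelpers
open scoped MatrixOrder

lemma Matrix.PosSemidef.sqrt_eq_cfc {A : Matrix n n ℂ} (h : A.PosSemidef) :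
    h.sqrt = CFC.sqrt A := by
  rw [CFC.sqrt_eq_cfc, cfc_nnreal_eq_real _ A, h.1.cfc_eq]
  simp only [IsHermitian.cfc, Unitary.conjStarAlgAut_apply]
  unfold Matrix.PosSemidef.sqrt
  refine congrArg (· * _) (congrArg (_ * ·) (congrArg Matrix.diagonal ?_))
  funext i
  simp only [Function.comp_apply]
  rw [Real.sqrt]
  rfl

lemma Matrix.PosSemidef.posSemidef_sqrt {A : Matrix n n ℂ} (h : A.PosSemidef) :
    h.sqrt.PosSemidef := by
  rw [h.sqrt_eq_cfc]
  exact (CFC.sqrt_nonneg A).posSemidef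

lemma Matrix.PosSemidef.sqrt_mul_self {A : Matrix n n ℂ} (h : A.PosSemidef) :
    h.sqrt * h.sqrt = A := by
  rw [h.sqrt_eq_cfc]
  exact CFC.sqrt_mul_sqrt_self A h.nonneg

lemma Matrix.PosSemidef.eq_sqrt_of_sq_eq {Q : Matrix n n ℂ} (hQ : Q.PosSemidef)
    {A : Matrix n n ℂ} (h : A.PosSemidef) (hsq : Q ^ 2 = A) : Q = h.sqrt := by
  rw [h.sqrt_eq_cfc]
  exact (CFC.sqrt_unique (by rw [← sq]; exact hsq) hQ.nonneg).symm

lemma Matrix.IsHermitian.star_mul_self_mul_eq_diagonal {A : Matrix n n ℂ} (hA : A.IsHermitian) :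
    star (hA.eigenvectorUnitary : Matrix n n ℂ) * A * (hA.eigenvectorUnitary : Matrix n n ℂ)
      = Matrix.diagonal (RCLike.ofReal ∘ hA.eigenvalues) := by
  have hs := hA.spectral_theorem
  rw [Unitary.conjStarAlgAut_apply] at hs
  have hU1 : star (hA.eigenvectorUnitary : Matrix n n ℂ) * (hA.eigenvectorUnitary : Matrix n n ℂ) = 1 :=
    Matrix.mem_unitaryGroup_iff'.mp hA.eigenvectorUnitary.2
  calc _ = star (hA.eigenvectorUnitary : Matrix n n ℂ) * ((hA.eigenvectorUnitary : Matrix n n ℂ)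
          * Matrix.diagonal (RCLike.ofReal ∘ hA.eigenvalues) * star (hA.eigenvectorUnitary : Matrix n n ℂ))
          * (hA.eigenvectorUnitary : Matrix n n ℂ) :=
        congrArg (fun X => star (hA.eigenvectorUnitary : Matrix n n ℂ) * X
          * (hA.eigenvectorUnitary : Matrix n n ℂ)) hs
    _ = _ := by
        simp only [Matrix.mul_assoc, hU1, Matrix.mul_one]
        rw [← Matrix.mul_assoc, hU1, Matrix.one_mul]

end PortHelpers

lemma matSqrt_of_psd {A : Matrix n n ℂ} (hA : A.PosSemidef) : matSqrt A = hA.sqrt :=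
  dif_pos hA

lemma kron_conjTranspose (A : Matrix n n ℂ) (B : Matrix r r ℂ) :
    (A ⊗ₖ B)ᴴ = Aᴴ ⊗ₖ Bᴴ := by
  ext ⟨i, x⟩ ⟨j, y⟩
  simp [Matrix.conjTranspose_apply, Matrix.kroneckerMap_apply, star_mul']

lemma trace_sqrt_comm (B : Matrix n n ℂ) :
    ((Matrix.posSemidef_self_mul_conjTranspose B).sqrt).trace
      = ((Matrix.posSemidef_conjTranspose_mul_self B).sqrt).trace := by
  have hM := Matrix.posSemidef_conjTranspose_mul_self B
  set U : Matrix n n ℂ := (hM.1.eigenvectorUnitary : Matrix n n ℂ) with hUdef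
  set lam : n → ℝ := hM.1.eigenvalues with hlamdef
  have hU1 : star U * U = 1 := (Matrix.mem_unitaryGroup_iff'.mp hM.1.eigenvectorUnitary.2)
  have hU2 : U * star U = 1 := (Matrix.mem_unitaryGroup_iff.mp hM.1.eigenvectorUnitary.2)
  have hlam0 : ∀ i, 0 ≤ lam i := fun i => hM.eigenvalues_nonneg i
  set D : Matrix n n ℂ := Matrix.diagonal fun i => (lam i : ℂ) with hDdef
  have hspec : star U * (Bᴴ * B) * U = D := by
    have h := hM.1.star_mul_self_mul_eq_diagonal
    rw [← hUdef] at h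
    rw [h, hDdef]
    rfl
  set C : Matrix n n ℂ := B * U with hCdef
  have hCC : Cᴴ * C = D := by
    rw [hCdef, Matrix.conjTranspose_mul, ← Matrix.star_eq_conjTranspose U, ← hspec]
    simp only [Matrix.mul_assoc]
  have hCCt : C * Cᴴ = B * Bᴴ := by
    rw [hCdef, Matrix.conjTranspose_mul, ← Matrix.star_eq_conjTranspose U]
    calc B * U * (star U * Bᴴ) = B * (U * star U) * Bᴴ := by simp only [Matrix.mul_assoc]
      _ = B * Bᴴ := by rw [hU2, Matrix.mul_one]
  set c : n → ℝ := fun i => if 0 < lam i then (Real.sqrt (lam i))⁻¹ else 0 with hcdef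
  have hc0 : ∀ i, 0 ≤ c i := by
    intro i; rw [hcdef]; dsimp only
    split
    · positivity
    · exact le_refl 0
  set Q : Matrix n n ℂ := C * Matrix.diagonal (fun i => (c i : ℂ)) * Cᴴ with hQdef
  have hQpsd : Q.PosSemidef := by
    have hsplit : Q = (Matrix.diagonal (fun i => (Real.sqrt (c i) : ℂ)) * Cᴴ)ᴴ
        * (Matrix.diagonal (fun i => (Real.sqrt (c i) : ℂ)) * Cᴴ) := by
      rw [Matrix.conjTranspose_mul, Matrix.conjTranspose_conjTranspose,
        Matrix.diagonal_conjTranspose]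
      have hstar : (star fun i => (Real.sqrt (c i) : ℂ)) = fun i => (Real.sqrt (c i) : ℂ) := by
        funext i; simp [Complex.conj_ofReal]
      rw [hstar, hQdef]
      have hdd : Matrix.diagonal (fun i => (Real.sqrt (c i) : ℂ))
          * Matrix.diagonal (fun i => (Real.sqrt (c i) : ℂ))
          = Matrix.diagonal (fun i => (c i : ℂ)) := by
        rw [Matrix.diagonal_mul_diagonal]
        have hf : (fun i => (Real.sqrt (c i) : ℂ) * (Real.sqrt (c i) : ℂ))
            = fun i => (c i : ℂ) := by
          funext i
          rw [← Complex.ofReal_mul, Real.mul_self_sqrt (hc0 i)]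
        rw [hf]
      calc C * Matrix.diagonal (fun i => (c i : ℂ)) * Cᴴ
          = C * (Matrix.diagonal (fun i => (Real.sqrt (c i) : ℂ))
              * Matrix.diagonal (fun i => (Real.sqrt (c i) : ℂ))) * Cᴴ := by
            rw [hdd]
        _ = C * Matrix.diagonal (fun i => (Real.sqrt (c i) : ℂ))
              * (Matrix.diagonal (fun i => (Real.sqrt (c i) : ℂ)) * Cᴴ) := by
            simp only [Matrix.mul_assoc]
    rw [hsplit]
    exact Matrix.posSemidef_conjTranspose_mul_self _
  have hQsq : Q ^ 2 = B * Bᴴ := by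
    rw [pow_two, hQdef]
    have h1 : C * Matrix.diagonal (fun i => (c i : ℂ)) * Cᴴ
        * (C * Matrix.diagonal (fun i => (c i : ℂ)) * Cᴴ)
        = C * (Matrix.diagonal (fun i => (c i : ℂ)) * (Cᴴ * C)
            * Matrix.diagonal (fun i => (c i : ℂ))) * Cᴴ := by
      simp only [Matrix.mul_assoc]
    rw [h1, hCC, hDdef, Matrix.diagonal_mul_diagonal, Matrix.diagonal_mul_diagonal]
    have h2 : (fun i => (c i : ℂ) * (lam i : ℂ) * (c i : ℂ))
        = fun i => (if 0 < lam i then (1 : ℂ) else 0) := by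
      funext i
      rw [hcdef]; dsimp only
      split
      · rename_i hpos
        rw [← Complex.ofReal_mul, ← Complex.ofReal_mul]
        norm_cast
        rw [mul_comm ((Real.sqrt (lam i))⁻¹) (lam i), mul_assoc,
          ← mul_inv, Real.mul_self_sqrt (hlam0 i)]
        exact mul_inv_cancel₀ (ne_of_gt hpos)
      · simp
    rw [h2]
    have hCf : C * Matrix.diagonal (fun i => (if 0 < lam i then (0 : ℂ) else 1)) = 0 := by
      set X := C * Matrix.diagonal (fun i => (if 0 < lam i then (0 : ℂ) else 1)) with hXdef
      have hX0 : Xᴴ * X = 0 := by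
        rw [hXdef, Matrix.conjTranspose_mul, Matrix.diagonal_conjTranspose]
        have h3 : Matrix.diagonal (star fun i => (if 0 < lam i then (0 : ℂ) else 1)) * Cᴴ
            * (C * Matrix.diagonal (fun i => (if 0 < lam i then (0 : ℂ) else 1)))
            = Matrix.diagonal (star fun i => (if 0 < lam i then (0 : ℂ) else 1)) * (Cᴴ * C)
              * Matrix.diagonal (fun i => (if 0 < lam i then (0 : ℂ) else 1)) := by
          simp only [Matrix.mul_assoc]
        rw [h3, hCC, hDdef, Matrix.diagonal_mul_diagonal, Matrix.diagonal_mul_diagonal]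
        have h4 : (fun i => (star fun i => (if 0 < lam i then (0 : ℂ) else 1)) i * (lam i : ℂ)
            * (if 0 < lam i then (0 : ℂ) else 1)) = fun _ => (0 : ℂ) := by
          funext i
          simp only [Pi.star_apply]
          split
          · simp
          · rename_i hneg
            have : lam i = 0 := le_antisymm (not_lt.mp hneg) (hlam0 i)
            simp [this]
        rw [h4, Matrix.diagonal_zero]
      exact Matrix.conjTranspose_mul_self_eq_zero.mp hX0
    have hsum : Matrix.diagonal (fun i => (if 0 < lam i then (1 : ℂ) else 0))
        + Matrix.diagonal (fun i => (if 0 < lam i then (0 : ℂ) else 1)) = (1 : Matrix n n ℂ) := by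
      rw [Matrix.diagonal_add]
      have hf : (fun i => (if 0 < lam i then (1 : ℂ) else 0) + (if 0 < lam i then (0 : ℂ) else 1))
          = fun _ => (1 : ℂ) := by
        funext i
        split <;> simp
      rw [hf, Matrix.diagonal_one]
    calc C * Matrix.diagonal (fun i => (if 0 < lam i then (1 : ℂ) else 0)) * Cᴴ
        = C * Matrix.diagonal (fun i => (if 0 < lam i then (1 : ℂ) else 0)) * Cᴴ
          + C * Matrix.diagonal (fun i => (if 0 < lam i then (0 : ℂ) else 1)) * Cᴴ := by
          rw [hCf, Matrix.zero_mul, add_zero]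
      _ = C * (Matrix.diagonal (fun i => (if 0 < lam i then (1 : ℂ) else 0))
          + Matrix.diagonal (fun i => (if 0 < lam i then (0 : ℂ) else 1))) * Cᴴ := by
          rw [Matrix.mul_add, Matrix.add_mul]
      _ = B * Bᴴ := by rw [hsum, Matrix.mul_one, hCCt]
  have hQ : Q = (Matrix.posSemidef_self_mul_conjTranspose B).sqrt :=
    hQpsd.eq_sqrt_of_sq_eq _ hQsq
  have hT1 : ((Matrix.posSemidef_self_mul_conjTranspose B).sqrt).trace
      = ∑ i, (Real.sqrt (lam i) : ℂ) := by
    rw [← hQ, hQdef, Matrix.trace_mul_cycle, hCC, hDdef,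
      Matrix.diagonal_mul_diagonal, Matrix.trace_diagonal]
    congr 1
    funext i
    rw [hcdef]; dsimp only
    split
    · rw [← Complex.ofReal_mul, ← div_eq_mul_inv, Real.div_sqrt]
    · rename_i hneg
      have : lam i = 0 := le_antisymm (not_lt.mp hneg) (hlam0 i)
      simp [this]
  have hMsqrt : hM.sqrt = U * Matrix.diagonal (fun i => (Real.sqrt (lam i) : ℂ)) * star U := rfl
  have hT2 : (hM.sqrt).trace = ∑ i, (Real.sqrt (lam i) : ℂ) := by
    rw [hMsqrt, Matrix.trace_mul_cycle, hU1, Matrix.one_mul, Matrix.trace_diagonal]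
  exact hT1.trans hT2.symm

lemma fidelity_symm {ρ σ : Matrix n n ℂ} (hρ : ρ.PosSemidef) (hσ : σ.PosSemidef) :
    fidelity ρ σ = fidelity σ ρ := by
  unfold fidelity
  have h1 : matSqrt σ * ρ * matSqrt σ
      = (hσ.sqrt * hρ.sqrt) * (hσ.sqrt * hρ.sqrt)ᴴ := by
    rw [matSqrt_of_psd hσ, Matrix.conjTranspose_mul, hσ.posSemidef_sqrt.1.eq,
      hρ.posSemidef_sqrt.1.eq]
    conv_lhs => rw [← hρ.sqrt_mul_self]
    simp only [Matrix.mul_assoc]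
  have h2 : matSqrt ρ * σ * matSqrt ρ
      = (hσ.sqrt * hρ.sqrt)ᴴ * (hσ.sqrt * hρ.sqrt) := by
    rw [matSqrt_of_psd hρ, Matrix.conjTranspose_mul, hσ.posSemidef_sqrt.1.eq,
      hρ.posSemidef_sqrt.1.eq]
    conv_lhs => rw [← hσ.sqrt_mul_self]
    simp only [Matrix.mul_assoc]
  rw [h1, h2,
    matSqrt_of_psd (Matrix.posSemidef_self_mul_conjTranspose (hσ.sqrt * hρ.sqrt)),
    matSqrt_of_psd (Matrix.posSemidef_conjTranspose_mul_self (hσ.sqrt * hρ.sqrt)),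
    trace_sqrt_comm]

lemma kron_psd {X : Matrix n n ℂ} (hX : X.PosSemidef) {τ : Matrix r r ℂ}
    (hτh : τᴴ = τ) (hτm : τ * τ = τ) : (X ⊗ₖ τ).PosSemidef := by
  have h : X ⊗ₖ τ = (hX.sqrt ⊗ₖ τ)ᴴ * (hX.sqrt ⊗ₖ τ) := by
    rw [kron_conjTranspose, hX.posSemidef_sqrt.1.eq, hτh, ← Matrix.mul_kronecker_mul,
      hX.sqrt_mul_self, hτm]
  rw [h]
  exact Matrix.posSemidef_conjTranspose_mul_self _

lemma matSqrt_kron {X : Matrix n n ℂ} (hX : X.PosSemidef) {τ : Matrix r r ℂ}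
    (hτh : τᴴ = τ) (hτm : τ * τ = τ) : matSqrt (X ⊗ₖ τ) = matSqrt X ⊗ₖ τ := by
  rw [matSqrt_of_psd (kron_psd hX hτh hτm), matSqrt_of_psd hX]
  refine ((kron_psd hX.posSemidef_sqrt hτh hτm).eq_sqrt_of_sq_eq _ ?_).symm
  rw [pow_two, ← Matrix.mul_kronecker_mul, hX.sqrt_mul_self, hτm]

lemma fidelity_kron {ρ σ : Matrix n n ℂ} (hρ : ρ.PosSemidef) (hσ : σ.PosSemidef)
    {τ : Matrix r r ℂ} (hτh : τᴴ = τ) (hτm : τ * τ = τ) (hτt : τ.trace = 1) :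
    fidelity (ρ ⊗ₖ τ) (σ ⊗ₖ τ) = fidelity ρ σ := by
  have hmid : (matSqrt σ * ρ * matSqrt σ).PosSemidef := by
    rw [matSqrt_of_psd hσ]
    have h := hρ.mul_mul_conjTranspose_same hσ.sqrt
    rwa [hσ.posSemidef_sqrt.1.eq] at h
  unfold fidelity
  rw [matSqrt_kron hσ hτh hτm]
  have h : (matSqrt σ ⊗ₖ τ) * (ρ ⊗ₖ τ) * (matSqrt σ ⊗ₖ τ)
      = (matSqrt σ * ρ * matSqrt σ) ⊗ₖ τ := by
    rw [← Matrix.mul_kronecker_mul, ← Matrix.mul_kronecker_mul, hτm, hτm]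
  rw [h, matSqrt_kron hmid hτh hτm, Matrix.trace_kronecker, hτt, mul_one]

lemma cptp_smul {m : Type*} [Fintype m] [DecidableEq m]
    {Φ : Matrix n n ℂ → Matrix m m ℂ} (hΦ : IsCPTP Φ) (c : ℂ) (ρ : Matrix n n ℂ) :
    Φ (c • ρ) = c • Φ ρ := by
  obtain ⟨N, Ks, hrep, -⟩ := hΦ
  rw [hrep, hrep, Finset.smul_sum]
  refine Finset.sum_congr rfl fun μ _ => ?_
  rw [Matrix.mul_smul, Matrix.smul_mul]

lemma cptp_psd {m : Type*} [Fintype m] [DecidableEq m]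
    {Φ : Matrix n n ℂ → Matrix m m ℂ} (hΦ : IsCPTP Φ) {ρ : Matrix n n ℂ}
    (hρ : ρ.PosSemidef) : (Φ ρ).PosSemidef := by
  obtain ⟨N, Ks, hrep, -⟩ := hΦ
  rw [hrep]
  exact Finset.sum_induction _ _ (fun a b ha hb => ha.add hb) Matrix.PosSemidef.zero
    (fun μ _ => hρ.mul_mul_conjTranspose_same _)

lemma tensorId_kron {m : Type*} [Fintype m] [DecidableEq m]
    (Φ : Matrix n n ℂ → Matrix m m ℂ) (hlin : ∀ (c : ℂ) (ρ : Matrix n n ℂ), Φ (c • ρ) = c • Φ ρ)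
    (ρ : Matrix n n ℂ) (τ : Matrix r r ℂ) :
    tensorId Φ (ρ ⊗ₖ τ) = Φ ρ ⊗ₖ τ := by
  ext ⟨i, x⟩ ⟨j, y⟩
  show Φ (Matrix.of fun i' j' => (ρ ⊗ₖ τ) (i', x) (j', y)) i j = (Φ ρ ⊗ₖ τ) (i, x) (j, y)
  have h : (Matrix.of fun i' j' => (ρ ⊗ₖ τ) (i', x) (j', y)) = (τ x y) • ρ := by
    ext i' j'
    simp [Matrix.kroneckerMap_apply, mul_comm]
  rw [h, hlin]
  simp [Matrix.kroneckerMap_apply, mul_comm]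

end AuxLemmas

/-- the ensemble recovery error is bounded by the worst-case
entanglement-fidelity error. -/
theorem statement_10
    {dA dA' dR : Type*} [Fintype dA] [DecidableEq dA] [Fintype dA'] [DecidableEq dA']
    [Fintype dR] [DecidableEq dR]
    (hdim : Fintype.card dR = Fintype.card dA)
    (Emap : Matrix dA dA ℂ → Matrix dA' dA' ℂ) (hE : IsCPTP Emap)
    (R : Matrix dA' dA' ℂ → Matrix dA dA ℂ) (hR : IsCPTP R)
    {K : Type*} [Fintype K] (hK : Fintype.card K ≤ Fintype.card dA)
    (p : K → ℝ) (ρs : K → Matrix dA dA ℂ)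
    (hp : ∀ k, 0 < p k) (hpsum : ∑ k, p k = 1) (hρs : ∀ k, IsState (ρs k)) :
    Real.sqrt (∑ k, p k * (purifiedDist (ρs k) (R (Emap (ρs k)))) ^ 2)
      ≤ sSup {x : ℝ | ∃ ρ : Matrix (dA × dR) (dA × dR) ℂ, IsState ρ ∧
          x = purifiedDist (tensorId (fun σ => R (Emap σ)) ρ) ρ} := by
  classical
  -- nonemptiness
  have hKne : Nonempty K := by
    by_contra h
    rw [not_nonempty_iff] at h
    rw [Finset.univ_eq_empty, Finset.sum_empty] at hpsum
    exact one_ne_zero hpsum.symm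
  obtain ⟨k₀⟩ := hKne
  have hAne : Nonempty dA := by
    by_contra h
    rw [not_nonempty_iff] at h
    have h1 := (hρs k₀).2
    rw [Matrix.trace, Finset.univ_eq_empty, Finset.sum_empty] at h1
    exact one_ne_zero h1.symm
  have hRne : Nonempty dR := by
    have : 0 < Fintype.card dA := Fintype.card_pos_iff.mpr hAne
    exact Fintype.card_pos_iff.mp (by omega)
  obtain ⟨r₀⟩ := hRne
  -- the fixed pure state on dR
  set τ : Matrix dR dR ℂ := Matrix.diagonal (fun x => if x = r₀ then (1 : ℂ) else 0) with hτdef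
  have hτh : τᴴ = τ := by
    rw [hτdef, Matrix.diagonal_conjTranspose]
    have hf : (star fun x => if x = r₀ then (1 : ℂ) else 0)
        = fun x => if x = r₀ then (1 : ℂ) else 0 := by
      funext x
      simp [Pi.star_apply, apply_ite]
    rw [hf]
  have hτm : τ * τ = τ := by
    rw [hτdef, Matrix.diagonal_mul_diagonal]
    have hf : (fun x => (if x = r₀ then (1 : ℂ) else 0) * (if x = r₀ then (1 : ℂ) else 0))
        = fun x => if x = r₀ then (1 : ℂ) else 0 := by
      funext x
      split <;> simp
    rw [hf]
  have hτt : τ.trace = 1 := by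
    rw [hτdef, Matrix.trace_diagonal]
    simp
  -- the channel
  have hΛsmul : ∀ (c : ℂ) (ρ : Matrix dA dA ℂ),
      (fun σ => R (Emap σ)) (c • ρ) = c • (fun σ => R (Emap σ)) ρ := by
    intro c ρ
    simp only
    rw [cptp_smul hE, cptp_smul hR]
  have hΛpsd : ∀ {ρ : Matrix dA dA ℂ}, ρ.PosSemidef → (R (Emap ρ)).PosSemidef :=
    fun hρ => cptp_psd hR (cptp_psd hE hρ)
  set S : Set ℝ := {x : ℝ | ∃ ρ : Matrix (dA × dR) (dA × dR) ℂ, IsState ρ ∧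
      x = purifiedDist (tensorId (fun σ => R (Emap σ)) ρ) ρ} with hSdef
  have hbdd : BddAbove S := by
    refine ⟨1, ?_⟩
    rintro x ⟨ρ, hρ, rfl⟩
    exact Real.sqrt_le_one.mpr (sub_le_self 1 (sq_nonneg _))
  have hmem : ∀ k, purifiedDist (ρs k) (R (Emap (ρs k))) ∈ S := by
    intro k
    refine ⟨ρs k ⊗ₖ τ, ⟨kron_psd (hρs k).1 hτh hτm, ?_⟩, ?_⟩
    · rw [Matrix.trace_kronecker, (hρs k).2, hτt, mul_one]
    · rw [tensorId_kron _ hΛsmul]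
      unfold purifiedDist
      rw [fidelity_kron (hΛpsd (hρs k).1) (hρs k).1 hτh hτm hτt,
        fidelity_symm (hΛpsd (hρs k).1) (hρs k).1]
  have hle : ∀ k, purifiedDist (ρs k) (R (Emap (ρs k))) ≤ sSup S :=
    fun k => le_csSup hbdd (hmem k)
  have hs0 : 0 ≤ sSup S := le_trans (Real.sqrt_nonneg _) (hle k₀)
  calc Real.sqrt (∑ k, p k * (purifiedDist (ρs k) (R (Emap (ρs k)))) ^ 2)
      ≤ Real.sqrt (∑ k, p k * (sSup S) ^ 2) := by
        apply Real.sqrt_le_sqrt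
        refine Finset.sum_le_sum fun k _ => ?_
        exact mul_le_mul_of_nonneg_left
          (pow_le_pow_left₀ (Real.sqrt_nonneg _) (hle k) 2) (hp k).le
    _ = sSup S := by
        rw [← Finset.sum_mul, hpsum, one_mul, Real.sqrt_sq hs0]
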